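/- Let J ⊆ V be a closed convex cone with H ∈ J*, and assume that −∞ < ζ_p(J) < +∞ or −∞ < ζ_d(J) < +∞. Then (i) −∞ < ζ_p(J) = ζ_d(J) < +∞ (strong duality holds), and (ii) the dual problem DCOP(J) attains its optimal value, i.e., there exists t̄ ∈ ℝ with Q − t̄H ∈ J* and t̄ = ζ_d(J). -/
import Mathlib


open RealInnerProductSpace

variable {V : Type*} [NormedAddCommGroup V] [InnerProductSpace ℝ V]

/-- A (not necessarily convex or closed) cone: closed under nonnegative scaling. -/
def IsCone (C : Set V) : Prop := ∀ X ∈ C, ∀ l : ℝ, 0 ≤ l → l • X ∈ C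

/-- The dual cone `C* = {Y : ⟨X, Y⟩ ≥ 0 for all X ∈ C}`. -/
def dualCone (C : Set V) : Set V := {Y | ∀ X ∈ C, 0 ≤ ⟪X, Y⟫}

/-- The primal optimal value `ζ_p(C) = inf {⟨Q, X⟩ : X ∈ C, ⟨H, X⟩ = 1}` in `[-∞, +∞]`;
it equals `+∞` when the feasible set is empty. -/
noncomputable def zetaP (Q H : V) (C : Set V) : EReal :=
  sInf ((fun X => ((⟪Q, X⟫ : ℝ) : EReal)) '' {X | X ∈ C ∧ ⟪H, X⟫ = 1})

/-- The dual optimal value `ζ_d(J) = sup {t : Q - t H ∈ J*}` in `[-∞, +∞]`;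
it equals `-∞` when the dual feasible set is empty. -/
noncomputable def zetaD (Q H : V) (J : Set V) : EReal :=
  sSup ((fun t : ℝ => (t : EReal)) '' {t | Q - t • H ∈ dualCone J})

/-- Theorem 2.1 (i)-(ii): strong duality and dual attainment for a closed convex cone `J`
with `H ∈ J*`, provided one of the primal/dual values is finite. -/
theorem stmt_6 [FiniteDimensional ℝ V] (Q H : V) (hH : H ≠ 0) (J : Set V)
    (hJconv : Convex ℝ J) (hJcone : IsCone J) (hJclosed : IsClosed J)
    (hHdual : H ∈ dualCone J)
    (hfin : (⊥ < zetaP Q H J ∧ zetaP Q H J < ⊤) ∨ (⊥ < zetaD Q H J ∧ zetaD Q H J < ⊤)) :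
    (⊥ < zetaP Q H J ∧ zetaP Q H J = zetaD Q H J ∧ zetaP Q H J < ⊤) ∧
      ∃ t : ℝ, Q - t • H ∈ dualCone J ∧ (t : EReal) = zetaD Q H J := by
  -- Weak duality
  have weak : zetaD Q H J ≤ zetaP Q H J := by
    apply sSup_le
    rintro a ⟨t, ht, rfl⟩
    apply le_sInf
    rintro b ⟨X, ⟨hXJ, hX1⟩, rfl⟩
    have h0 := ht X hXJ
    rw [inner_sub_right, real_inner_smul_right] at h0
    have hXH : ⟪X, H⟫ = 1 := by rw [real_inner_comm]; exact hX1
    rw [hXH, mul_one] at h0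
    have hQX : ⟪Q, X⟫ = ⟪X, Q⟫ := real_inner_comm _ _
    have : t ≤ ⟪Q, X⟫ := by linarith
    exact EReal.coe_le_coe_iff.2 this
  -- Step A: get a primal feasible point and ⊥ < zetaP
  have key : (∃ X₀, X₀ ∈ J ∧ ⟪H, X₀⟫ = 1) ∧ ⊥ < zetaP Q H J := by
    rcases hfin with ⟨hb, htp⟩ | ⟨hb, htp⟩
    · refine ⟨?_, hb⟩
      by_contra hemp
      have hset : {X | X ∈ J ∧ ⟪H, X⟫ = 1} = (∅ : Set V) := by
        ext X
        simp only [Set.mem_setOf_eq, Set.mem_empty_iff_false, iff_false]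
        intro h; exact hemp ⟨X, h⟩
      have : zetaP Q H J = ⊤ := by unfold zetaP; rw [hset, Set.image_empty, sInf_empty]
      exact absurd this htp.ne
    · have hbd : ⊥ < zetaP Q H J := lt_of_lt_of_le hb weak
      refine ⟨?_, hbd⟩
      by_contra hemp
      push_neg at hemp
      have hall : ∀ X ∈ J, ⟪H, X⟫ = 0 := by
        intro X hX
        by_contra hne
        have hpos : 0 < ⟪H, X⟫ :=
          lt_of_le_of_ne (by rw [real_inner_comm]; exact hHdual X hX) (Ne.symm hne)
        refine hemp ((⟪H, X⟫)⁻¹ • X) (hJcone X hX _ (inv_nonneg.2 hpos.le)) ?_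
        rw [real_inner_smul_right]
        field_simp
      have hSne : ∃ t₀ : ℝ, Q - t₀ • H ∈ dualCone J := by
        by_contra hSe
        push_neg at hSe
        have hset : {t : ℝ | Q - t • H ∈ dualCone J} = ∅ :=
          Set.eq_empty_iff_forall_notMem.2 hSe
        have : zetaD Q H J = ⊥ := by unfold zetaD; rw [hset, Set.image_empty, sSup_empty]
        exact absurd this hb.ne'
      obtain ⟨t₀, ht₀⟩ := hSne
      have hallS : ∀ t : ℝ, Q - t • H ∈ dualCone J := by
        intro t X hX
        have h1 := ht₀ X hX
        have hz : ⟪X, H⟫ = 0 := by rw [real_inner_comm]; exact hall X hX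
        rw [inner_sub_right, real_inner_smul_right, hz] at h1 ⊢
        linarith
      have hr := EReal.coe_toReal htp.ne hb.ne'
      set r := (zetaD Q H J).toReal
      have hle : ((r + 1 : ℝ) : EReal) ≤ zetaD Q H J := le_sSup ⟨r + 1, hallS _, rfl⟩
      rw [← hr] at hle
      have : (r + 1 : ℝ) ≤ r := EReal.coe_le_coe_iff.1 hle
      linarith
  obtain ⟨⟨X₀, hX₀J, hX₀1⟩, hbot⟩ := key
  have hple : zetaP Q H J ≤ ((⟪Q, X₀⟫ : ℝ) : EReal) := sInf_le ⟨X₀, ⟨hX₀J, hX₀1⟩, rfl⟩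
  have htop : zetaP Q H J < ⊤ := lt_of_le_of_lt hple (EReal.coe_lt_top _)
  have hm := EReal.coe_toReal htop.ne hbot.ne'
  set m := (zetaP Q H J).toReal with hmdef
  -- If X ∈ J with ⟨H, X⟩ = 0 then ⟨Q, X⟩ ≥ 0
  have hzero : ∀ X ∈ J, ⟪H, X⟫ = 0 → 0 ≤ ⟪Q, X⟫ := by
    intro X hX hHX
    by_contra hneg
    push_neg at hneg
    have hm0 : m ≤ ⟪Q, X₀⟫ := by
      have h := hple; rw [← hm] at h; exact_mod_cast h
    set l : ℝ := (⟪Q, X₀⟫ - m + 1) / (-⟪Q, X⟫) with hl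
    have hlpos : 0 ≤ l := div_nonneg (by linarith) (by linarith)
    have hmem : X₀ + l • X ∈ J := by
      have h1 : l • X ∈ J := hJcone X hX l hlpos
      have h2 : (1/2 : ℝ) • X₀ + (1/2 : ℝ) • (l • X) ∈ J :=
        hJconv hX₀J h1 (by norm_num) (by norm_num) (by norm_num)
      have h3 := hJcone _ h2 2 (by norm_num)
      rw [smul_add, smul_smul, smul_smul] at h3
      norm_num at h3
      exact h3
    have hfeas : ⟪H, X₀ + l • X⟫ = 1 := by
      rw [inner_add_right, real_inner_smul_right, hHX, hX₀1]; ring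
    have hval : ⟪Q, X₀ + l • X⟫ = m - 1 := by
      have hne : ⟪Q, X⟫ ≠ 0 := ne_of_lt hneg
      have hlx : l * ⟪Q, X⟫ = -(⟪Q, X₀⟫ - m + 1) := by
        rw [hl, div_mul_eq_mul_div, div_neg, mul_div_assoc, div_self hne, mul_one]
      rw [inner_add_right, real_inner_smul_right, hlx]
      ring
    have hle2 : zetaP Q H J ≤ ((m - 1 : ℝ) : EReal) := by
      rw [← hval]; exact sInf_le ⟨_, ⟨hmem, hfeas⟩, rfl⟩
    rw [← hm] at hle2
    have : m ≤ m - 1 := EReal.coe_le_coe_iff.1 hle2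
    linarith
  -- every t < m is dual feasible
  have hS : ∀ t : ℝ, t < m → Q - t • H ∈ dualCone J := by
    intro t ht X hX
    rw [inner_sub_right, real_inner_smul_right]
    have hc : 0 ≤ ⟪X, H⟫ := hHdual X hX
    rcases eq_or_lt_of_le hc with hc0 | hcpos
    · have h1 := hzero X hX (by rw [real_inner_comm]; exact hc0.symm)
      have hXQ : 0 ≤ ⟪X, Q⟫ := by rw [real_inner_comm]; exact h1
      rw [← hc0]; linarith
    · set c := ⟪X, H⟫ with hcdef
      have hfeas : c⁻¹ • X ∈ J := hJcone X hX _ (inv_nonneg.2 hcpos.le)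
      have hfe1 : ⟪H, c⁻¹ • X⟫ = 1 := by
        rw [real_inner_smul_right, real_inner_comm, ← hcdef]
        field_simp
      have hle : zetaP Q H J ≤ ((⟪Q, c⁻¹ • X⟫ : ℝ) : EReal) := sInf_le ⟨_, ⟨hfeas, hfe1⟩, rfl⟩
      rw [← hm] at hle
      have hle' : m ≤ ⟪Q, c⁻¹ • X⟫ := EReal.coe_le_coe_iff.1 hle
      rw [real_inner_smul_right, inv_mul_eq_div, le_div_iff₀ hcpos] at hle'
      have hXQ : ⟪X, Q⟫ = ⟪Q, X⟫ := real_inner_comm _ _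
      rw [hXQ]
      nlinarith
  -- m itself is dual feasible
  have hmS : Q - m • H ∈ dualCone J := by
    intro X hX
    rw [inner_sub_right, real_inner_smul_right]
    have hc : 0 ≤ ⟪X, H⟫ := hHdual X hX
    rcases eq_or_lt_of_le hc with hc0 | hcpos
    · have h1 := hS (m - 1) (by linarith) X hX
      rw [inner_sub_right, real_inner_smul_right, ← hc0] at h1
      rw [← hc0]; linarith
    · by_contra hneg
      push_neg at hneg
      set c := ⟪X, H⟫ with hcdef
      have hlt : ⟪X, Q⟫ / c < m := (div_lt_iff₀ hcpos).2 (by nlinarith)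
      set t := (⟪X, Q⟫ / c + m) / 2 with htdef
      have ht : t < m := by rw [htdef]; linarith
      have h1 := hS t ht X hX
      rw [inner_sub_right, real_inner_smul_right] at h1
      have h2 : t ≤ ⟪X, Q⟫ / c := (le_div_iff₀ hcpos).2 (by linarith)
      have h3 : ⟪X, Q⟫ / c < t := by rw [htdef]; linarith
      linarith
  have hdge : ((m : ℝ) : EReal) ≤ zetaD Q H J := le_sSup ⟨m, hmS, rfl⟩
  have heq : zetaP Q H J = zetaD Q H J := by
    refine le_antisymm ?_ weak
    rw [← hm]; exact hdge
  exact ⟨⟨hbot, heq, htop⟩, ⟨m, hmS, by rw [← heq]; exact hm⟩⟩
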